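/- For any positive integer k and any graph G with |E(G)| ≥ (d/2)|V(G)|², the number of homomorphisms from the path P_k with k edges into G is at least d^k · |V(G)|^{k+1}. -/

import Mathlib

open Finset
open scoped Classical

/-- Number of edges of `G` spanned by the vertex set `X`. -/
noncomputable def edgesIn {V : Type*} [Fintype V] (G : SimpleGraph V) (X : Finset V) : ℕ :=
  (G.edgeFinset.filter (fun e => ∀ v ∈ e, v ∈ X)).card

/-- `G` is `(ε, d)`-dense: every vertex set `X` with `|X| ≥ ε n` spans at least
`(d/2)|X|²` edges. -/
def IsEpsDense {V : Type*} [Fintype V] (G : SimpleGraph V) (ε d : ℝ) : Prop :=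
  ∀ X : Finset V, ε * (Fintype.card V : ℝ) ≤ (X.card : ℝ) →
    d / 2 * (X.card : ℝ) ^ 2 ≤ (edgesIn G X : ℝ)

/-- The number of closed walks of length `r` in `G`, i.e. of sequences
`(x₁, …, x_r)` with all consecutive pairs (cyclically) adjacent. -/
noncomputable def closedWalkCount {V : Type*} [Fintype V] (G : SimpleGraph V) (r : ℕ) : ℕ :=
  (Finset.univ.filter (fun x : Fin r → V => ∀ i, G.Adj (x i) (x (finRotate r i)))).card

/-- The number of walks of length `m` from `x` to `y` in `G`. -/
noncomputable def walkCount {V : Type*} [Fintype V] (G : SimpleGraph V) (m : ℕ) (x y : V) : ℕ :=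
  (Finset.univ.filter (fun a : Fin (m + 1) → V =>
    a 0 = x ∧ a (Fin.last m) = y ∧ ∀ i : Fin m, G.Adj (a i.castSucc) (a i.succ))).card

/-- The number of homomorphisms from the path with `k` edges into `G`. -/
noncomputable def pathHomCount {V : Type*} [Fintype V] (G : SimpleGraph V) (k : ℕ) : ℕ :=
  (Finset.univ.filter (fun a : Fin (k + 1) → V =>
    ∀ i : Fin k, G.Adj (a i.castSucc) (a i.succ))).card

/-- `∑_{xy ∈ E(G)} f(x) f(y)`, summed over unordered edges. -/
noncomputable def edgeSum {V : Type*} [Fintype V] (G : SimpleGraph V) (f : V → ℝ) : ℝ :=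
  ∑ e ∈ G.edgeFinset, Sym2.lift ⟨fun x y => f x * f y, fun x y => mul_comm _ _⟩ e

open Matrix
namespace BRaux

variable {V : Type*} [Fintype V] (G : SimpleGraph V)

noncomputable def u (m : ℕ) : V → ℝ := (G.adjMatrix ℝ ^ m) *ᵥ (fun _ => 1)

noncomputable def h (k : ℕ) : ℝ := ∑ x, u G k x

lemma u_zero (x : V) : u G 0 x = 1 := by simp [u, Matrix.one_mulVec]

lemma u_succ (m : ℕ) (x : V) :
    u G (m + 1) x = ∑ y, (G.adjMatrix ℝ) x y * u G m y := by
  simp only [u, pow_succ', ← Matrix.mulVec_mulVec]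
  simp [Matrix.mulVec, dotProduct]

lemma adj_symm_entry (x y : V) : (G.adjMatrix ℝ) x y = (G.adjMatrix ℝ) y x := by
  simp only [SimpleGraph.adjMatrix_apply]
  exact if_congr (G.adj_comm x y) rfl rfl

lemma key (k : ℕ) (f : V → ℝ) :
    ∑ a : Fin (k+1) → V,
        (∏ i : Fin k, (G.adjMatrix ℝ) (a i.castSucc) (a i.succ)) * f (a (Fin.last k))
      = ∑ x, u G k x * f x := by
  induction k generalizing f with
  | zero =>
    simp only [u_zero, one_mul, Finset.univ_eq_empty, Finset.prod_empty]
    exact Fintype.sum_equiv (Equiv.funUnique (Fin 1) V) _ _ (fun a => rfl)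
  | succ k ih =>
    rw [← Equiv.sum_comp (Fin.snocEquiv (fun _ : Fin (k+2) => V))
      (fun a : Fin (k+2) → V =>
        (∏ i : Fin (k+1), (G.adjMatrix ℝ) (a i.castSucc) (a i.succ)) * f (a (Fin.last (k+1))))]
    rw [Fintype.sum_prod_type]
    have hterm : ∀ (y : V) (b : Fin (k+1) → V),
        (∏ i : Fin (k+1),
          (G.adjMatrix ℝ) ((Fin.snocEquiv (fun _ : Fin (k+2) => V) (y, b)) i.castSucc)
            ((Fin.snocEquiv (fun _ : Fin (k+2) => V) (y, b)) i.succ))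
          * f ((Fin.snocEquiv (fun _ : Fin (k+2) => V) (y, b)) (Fin.last (k+1)))
        = ((∏ i : Fin k, (G.adjMatrix ℝ) (b i.castSucc) (b i.succ))
            * ((G.adjMatrix ℝ) (b (Fin.last k)) y * f y)) := by
      intro y b
      rw [Fin.prod_univ_castSucc]
      simp only [Fin.snocEquiv_apply, Fin.succ_castSucc, Fin.snoc_castSucc,
        Fin.succ_last, Fin.snoc_last]
      ring
    simp only [hterm]
    rw [Finset.sum_comm]
    have : ∀ b : Fin (k+1) → V,
        ∑ y, (∏ i : Fin k, (G.adjMatrix ℝ) (b i.castSucc) (b i.succ))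
            * ((G.adjMatrix ℝ) (b (Fin.last k)) y * f y)
        = (∏ i : Fin k, (G.adjMatrix ℝ) (b i.castSucc) (b i.succ))
            * ((fun z => ∑ y, (G.adjMatrix ℝ) z y * f y) (b (Fin.last k))) := by
      intro b
      rw [Finset.mul_sum]
    simp only [this]
    have h2 := ih (fun z => ∑ y, (G.adjMatrix ℝ) z y * f y)
    rw [h2]
    have h3 : ∀ x, u G k x * ∑ y, (G.adjMatrix ℝ) x y * f y
        = ∑ y, (G.adjMatrix ℝ) y x * u G k x * f y := by
      intro x
      rw [Finset.mul_sum]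
      exact Finset.sum_congr rfl fun y _ => by rw [adj_symm_entry G x y]; ring
    simp only [h3]
    rw [Finset.sum_comm]
    refine Finset.sum_congr rfl fun y _ => ?_
    rw [u_succ, Finset.sum_mul]


lemma adj_nonneg (x y : V) : (0:ℝ) ≤ (G.adjMatrix ℝ) x y := by
  simp only [SimpleGraph.adjMatrix_apply]; positivity

lemma u_nonneg (m : ℕ) (x : V) : 0 ≤ u G m x := by
  induction m generalizing x with
  | zero => simp [u_zero]
  | succ m ih =>
    rw [u_succ]
    exact Finset.sum_nonneg fun y _ => mul_nonneg (adj_nonneg G x y) (ih y)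

lemma u_one (x : V) : u G 1 x = (G.degree x : ℝ) := by
  rw [u_succ]
  simp only [u_zero, mul_one, SimpleGraph.adjMatrix_apply]
  rw [Finset.sum_boole]
  congr 1
  rw [SimpleGraph.degree, SimpleGraph.neighborFinset_eq_filter]

/-- one step of a walk from a non-isolated vertex keeps count ≥ 1. -/
lemma one_le_u {x y : V} (hxy : G.Adj x y) (m : ℕ) : 1 ≤ u G m x := by
  induction m generalizing x y with
  | zero => simp [u_zero]
  | succ m ih =>
    rw [u_succ]
    calc (1:ℝ) ≤ (G.adjMatrix ℝ) x y * u G m y := by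
          rw [SimpleGraph.adjMatrix_apply, if_pos hxy, one_mul]
          exact ih (G.adj_symm hxy)
      _ ≤ ∑ z, (G.adjMatrix ℝ) x z * u G m z :=
          Finset.single_le_sum (fun z _ => mul_nonneg (adj_nonneg G x z) (u_nonneg G m z))
            (Finset.mem_univ y)

lemma col_sum_eq (m : ℕ) (y : V) : ∑ x, (G.adjMatrix ℝ ^ m) x y = u G m y := by
  have hsym : (G.adjMatrix ℝ ^ m)ᵀ = (G.adjMatrix ℝ ^ m) := by
    rw [Matrix.transpose_pow, SimpleGraph.transpose_adjMatrix]
  have : ∀ x, (G.adjMatrix ℝ ^ m) x y = (G.adjMatrix ℝ ^ m) y x := by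
    intro x
    conv_lhs => rw [← hsym]
    rfl
  simp only [this]
  simp [u, Matrix.mulVec, dotProduct]

lemma h_add (a b : ℕ) : h G (a + b) = ∑ x, u G a x * u G b x := by
  have : u G (a+b) = (G.adjMatrix ℝ ^ a) *ᵥ (u G b) := by
    rw [u, pow_add, ← Matrix.mulVec_mulVec]; rfl
  rw [h]
  simp only [this, Matrix.mulVec, dotProduct]
  rw [Finset.sum_comm]
  refine Finset.sum_congr rfl fun y _ => ?_
  rw [← Finset.sum_mul, col_sum_eq, mul_comm]

lemma h_odd (m : ℕ) :
    h G (m + (m+1)) = ∑ x, ∑ y, (G.adjMatrix ℝ) x y * (u G m x * u G m y) := by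
  rw [h_add]
  refine Finset.sum_congr rfl fun x _ => ?_
  rw [u_succ, Finset.mul_sum]
  refine Finset.sum_congr rfl fun y _ => by ring


lemma pathHomCount_eq (k : ℕ) : (pathHomCount G k : ℝ) = h G k := by
  have h1 : pathHomCount G k
      = ∑ a : Fin (k+1) → V, (if (∀ i : Fin k, G.Adj (a i.castSucc) (a i.succ)) then 1 else 0) := by
    rw [pathHomCount, Finset.card_filter]
  rw [h1]
  push_cast
  have : ∀ a : Fin (k+1) → V,
      (if (∀ i : Fin k, G.Adj (a i.castSucc) (a i.succ)) then (1:ℝ) else 0)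
        = (∏ i : Fin k, (G.adjMatrix ℝ) (a i.castSucc) (a i.succ)) * (fun _ : V => (1:ℝ)) (a (Fin.last k)) := by
    intro a
    simp only [SimpleGraph.adjMatrix_apply, Finset.prod_boole, mul_one]
    congr 1
    simp
  simp only [this]
  have h2 := key G k (fun _ => 1)
  rw [h2]
  simp [h]

lemma sum_adj_eq_u_one (y : V) : ∑ x, (G.adjMatrix ℝ) x y = u G 1 y := by
  rw [u_succ]
  refine Finset.sum_congr rfl fun x _ => ?_
  rw [adj_symm_entry, u_zero, mul_one]

lemma u_one_pos_exists {x : V} (hx : u G 1 x ≠ 0) : ∃ y, G.Adj x y := by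
  rw [← G.degree_pos_iff_exists_adj]
  by_contra hc
  push_neg at hc
  have : G.degree x = 0 := Nat.le_zero.mp hc
  rw [u_one, this] at hx
  simp at hx

/-- The key degree-weighted estimate, by induction via Hölder. -/
lemma T_le (m : ℕ) (hm : 1 ≤ m) :
    ∑ x, u G 1 x * (u G m x) ^ (-(1/(m:ℝ))) ≤ (Fintype.card V : ℝ) := by
  induction m, hm using Nat.le_induction with
  | base =>
    calc ∑ x, u G 1 x * (u G 1 x) ^ (-(1/((1:ℕ):ℝ)))
        ≤ ∑ x : V, (1:ℝ) := by
          refine Finset.sum_le_sum fun x _ => ?_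
          rcases eq_or_lt_of_le (u_nonneg G 1 x) with h0 | hpos
          · rw [← h0, Real.zero_rpow (by norm_num), mul_zero]; norm_num
          · rw [show (-(1/((1:ℕ):ℝ))) = (-1 : ℝ) by norm_num, Real.rpow_neg_one,
              mul_inv_cancel₀ (ne_of_gt hpos)]
      _ = (Fintype.card V : ℝ) := by simp
  | succ m hm ih =>
    have hm1 : (0:ℝ) < (m:ℝ) := by exact_mod_cast hm
    set p : ℝ := ((m:ℝ) + 1) with hp
    set q : ℝ := ((m:ℝ) + 1) / (m:ℝ) with hq
    have hpq : p.HolderConjugate q := by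
      rw [Real.holderConjugate_iff]; constructor
      · rw [hp]; linarith
      · rw [hp, hq]; field_simp; ring
    have hppos : 0 < p := hpq.pos
    have hqpos : 0 < q := hpq.symm.pos
    -- Z x
    set Z : V → ℝ := fun x => ∑ y, (G.adjMatrix ℝ) x y * (u G m y) ^ (-(1/(m:ℝ))) with hZ
    have hZnonneg : ∀ x, 0 ≤ Z x := fun x =>
      Finset.sum_nonneg fun y _ => mul_nonneg (adj_nonneg G x y)
        (Real.rpow_nonneg (u_nonneg G m y) _)
    -- (a) pointwise Hölder
    have ha : ∀ x, u G 1 x ≤ (u G (m+1) x) ^ (1/p) * (Z x) ^ (1/q) := by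
      intro x
      have hH := Real.inner_le_Lp_mul_Lq_of_nonneg (Finset.univ)
        (f := fun y => ((G.adjMatrix ℝ) x y * u G m y) ^ (1/p))
        (g := fun y => ((G.adjMatrix ℝ) x y * (u G m y) ^ (-(1/(m:ℝ)))) ^ (1/q))
        hpq (fun i _ => Real.rpow_nonneg (mul_nonneg (adj_nonneg G x i) (u_nonneg G m i)) _)
        (fun i _ => Real.rpow_nonneg (mul_nonneg (adj_nonneg G x i)
          (Real.rpow_nonneg (u_nonneg G m i) _)) _)
      have e1 : ∀ y, ((G.adjMatrix ℝ) x y * u G m y) ^ (1/p)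
          * ((G.adjMatrix ℝ) x y * (u G m y) ^ (-(1/(m:ℝ)))) ^ (1/q)
          = (G.adjMatrix ℝ) x y := by
        intro y
        by_cases hxy : G.Adj x y
        · have hu : (0:ℝ) < u G m y := lt_of_lt_of_le zero_lt_one (one_le_u G (G.adj_symm hxy) m)
          rw [SimpleGraph.adjMatrix_apply, if_pos hxy, one_mul, one_mul]
          rw [← Real.rpow_mul (u_nonneg G m y), ← Real.rpow_add hu]
          rw [show (1/p + -(1/(m:ℝ)) * (1/q)) = 0 by
            rw [hp, hq]; field_simp; ring, Real.rpow_zero]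
        · rw [SimpleGraph.adjMatrix_apply, if_neg hxy, zero_mul, zero_mul,
            Real.zero_rpow (by positivity), zero_mul]
      have hrr : ∀ (t c : ℝ), 0 ≤ t → 0 < c → (t ^ (1/c)) ^ c = t := by
        intro t c ht hc
        rw [one_div, Real.rpow_inv_rpow ht (ne_of_gt hc)]
      have e2 : ∀ y, (((G.adjMatrix ℝ) x y * u G m y) ^ (1/p)) ^ p
          = (G.adjMatrix ℝ) x y * u G m y := fun y =>
        hrr _ _ (mul_nonneg (adj_nonneg G x y) (u_nonneg G m y)) hppos
      have e3 : ∀ y, (((G.adjMatrix ℝ) x y * (u G m y) ^ (-(1/(m:ℝ)))) ^ (1/q)) ^ q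
          = (G.adjMatrix ℝ) x y * (u G m y) ^ (-(1/(m:ℝ))) := fun y =>
        hrr _ _ (mul_nonneg (adj_nonneg G x y)
          (Real.rpow_nonneg (u_nonneg G m y) _)) hqpos
      simp only [e1, e2, e3] at hH
      calc u G 1 x = ∑ y, (G.adjMatrix ℝ) x y := by
            rw [u_succ]; exact Finset.sum_congr rfl fun y _ => by rw [u_zero, mul_one]
        _ ≤ _ := by
            refine le_trans hH ?_
            rw [← u_succ]
    -- (b) multiply by the negative power
    have hb : ∀ x, u G 1 x * (u G (m+1) x) ^ (-(1/p)) ≤ (Z x) ^ (1/q) := by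
      intro x
      by_cases hx : u G 1 x = 0
      · rw [hx, zero_mul]
        exact Real.rpow_nonneg (hZnonneg x) _
      · obtain ⟨y, hxy⟩ := u_one_pos_exists G hx
        have hU : (0:ℝ) < u G (m+1) x := lt_of_lt_of_le zero_lt_one (one_le_u G hxy (m+1))
        have := mul_le_mul_of_nonneg_right (ha x)
          (Real.rpow_nonneg hU.le (-(1/p)) )
        refine le_trans this (le_of_eq ?_)
        rw [mul_comm ((u G (m+1) x) ^ (1/p)) ((Z x) ^ (1/q)), mul_assoc,
          ← Real.rpow_add hU, add_neg_cancel, Real.rpow_zero, mul_one]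
    -- (c) sum and use Hölder again
    have hsumZ : ∑ x, Z x = ∑ y, u G 1 y * (u G m y) ^ (-(1/(m:ℝ))) := by
      rw [hZ, Finset.sum_comm]
      refine Finset.sum_congr rfl fun y _ => ?_
      rw [← Finset.sum_mul, sum_adj_eq_u_one]
    have hc : ∑ x, (Z x) ^ (1/q) ≤ (∑ x, Z x) ^ (1/q) * (Fintype.card V : ℝ) ^ (1/p) := by
      have hH2 := Real.inner_le_Lp_mul_Lq_of_nonneg (Finset.univ)
        (f := fun x : V => (Z x) ^ (1/q)) (g := fun _ : V => (1:ℝ)) hpq.symm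
        (fun i _ => Real.rpow_nonneg (hZnonneg i) _) (fun i _ => zero_le_one)
      simp only [mul_one, Real.one_rpow] at hH2
      have e4 : ∀ x, ((Z x) ^ (1/q)) ^ q = Z x := by
        intro x
        rw [one_div, Real.rpow_inv_rpow (hZnonneg x) (ne_of_gt hqpos)]
      simp only [e4] at hH2
      simpa using hH2
    calc ∑ x, u G 1 x * (u G (m+1) x) ^ (-(1/((m+1:ℕ):ℝ)))
        = ∑ x, u G 1 x * (u G (m+1) x) ^ (-(1/p)) := by
          refine Finset.sum_congr rfl fun x _ => ?_
          norm_num [hp]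
      _ ≤ ∑ x, (Z x) ^ (1/q) := Finset.sum_le_sum fun x _ => hb x
      _ ≤ (∑ x, Z x) ^ (1/q) * (Fintype.card V : ℝ) ^ (1/p) := hc
      _ ≤ (Fintype.card V : ℝ) ^ (1/q) * (Fintype.card V : ℝ) ^ (1/p) := by
          refine mul_le_mul_of_nonneg_right ?_ (Real.rpow_nonneg (by positivity) _)
          refine Real.rpow_le_rpow (Finset.sum_nonneg fun x _ => hZnonneg x) ?_
            (le_of_lt (by positivity))
          rw [hsumZ]; exact ih
      _ = (Fintype.card V : ℝ) := by
          have hone : 1/q + 1/p = 1 := by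
            simp only [one_div]
            rw [add_comm]
            exact hpq.inv_add_inv_eq_one
          rw [← Real.rpow_add' (by positivity) (by rw [hone]; norm_num), hone,
            Real.rpow_one]

lemma sum_pairs_adj : ∑ z : V × V, (G.adjMatrix ℝ) z.1 z.2 = h G 1 := by
  rw [Fintype.sum_prod_type, h]
  refine Finset.sum_congr rfl fun x _ => ?_
  rw [u_succ]
  exact Finset.sum_congr rfl fun y _ => by rw [u_zero, mul_one]

lemma sum_pairs_uu (m : ℕ) :
    ∑ z : V × V, (G.adjMatrix ℝ) z.1 z.2 * (u G m z.1 * u G m z.2) = h G (2*m+1) := by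
  rw [Fintype.sum_prod_type, show 2*m+1 = m + (m+1) by omega, h_odd]

lemma sqrt_amgm {a b c : ℝ} (ha : 0 < a) (hb : 0 < b) (hc : 0 < c) :
    (a * b) ^ (-(1/(2*c))) ≤ ((a ^ (-(1/c)) ) + (b ^ (-(1/c)))) / 2 := by
  have hs : (0:ℝ) ≤ a ^ (-(1/c)) := Real.rpow_nonneg ha.le _
  have ht : (0:ℝ) ≤ b ^ (-(1/c)) := Real.rpow_nonneg hb.le _
  have h1 : (a * b) ^ (-(1/(2*c))) = Real.sqrt (a ^ (-(1/c)) * b ^ (-(1/c))) := by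
    rw [← Real.mul_rpow ha.le hb.le, Real.sqrt_eq_rpow,
      ← Real.rpow_mul (mul_nonneg ha.le hb.le)]
    congr 1
    field_simp
  rw [h1, Real.sqrt_mul hs]
  nlinarith [sq_nonneg (Real.sqrt (a ^ (-(1/c))) - Real.sqrt (b ^ (-(1/c)))),
    Real.sq_sqrt hs, Real.sq_sqrt ht, Real.sqrt_nonneg (a ^ (-(1/c))),
    Real.sqrt_nonneg (b ^ (-(1/c)))]

lemma odd_bound (m : ℕ) (hm : 1 ≤ m) :
    h G 1 ^ (2*m+1) ≤ h G (2*m+1) * (Fintype.card V : ℝ) ^ (2*m) := by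
  have hm1 : (0:ℝ) < (m:ℝ) := by exact_mod_cast hm
  set P : ℝ := (2*(m:ℝ)+1) with hP
  set Q : ℝ := (2*(m:ℝ)+1) / (2*(m:ℝ)) with hQ
  have hPQ : P.HolderConjugate Q := by
    rw [Real.holderConjugate_iff]; constructor
    · rw [hP]; linarith
    · rw [hP, hQ]; field_simp; ring
  have hPpos : 0 < P := hPQ.pos
  have hQpos : 0 < Q := hPQ.symm.pos
  have hrr : ∀ (t c : ℝ), 0 ≤ t → 0 < c → (t ^ (1/c)) ^ c = t := by
    intro t c ht hc
    rw [one_div, Real.rpow_inv_rpow ht (ne_of_gt hc)]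
  have hH := Real.inner_le_Lp_mul_Lq_of_nonneg (Finset.univ (α := V × V))
    (f := fun z => ((G.adjMatrix ℝ) z.1 z.2 * (u G m z.1 * u G m z.2)) ^ (1/P))
    (g := fun z => ((G.adjMatrix ℝ) z.1 z.2
      * (u G m z.1 * u G m z.2) ^ (-(1/(2*(m:ℝ))))) ^ (1/Q))
    hPQ
    (fun z _ => Real.rpow_nonneg (mul_nonneg (adj_nonneg G _ _)
      (mul_nonneg (u_nonneg G m _) (u_nonneg G m _))) _)
    (fun z _ => Real.rpow_nonneg (mul_nonneg (adj_nonneg G _ _)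
      (Real.rpow_nonneg (mul_nonneg (u_nonneg G m _) (u_nonneg G m _)) _)) _)
  have e1 : ∀ z : V × V,
      ((G.adjMatrix ℝ) z.1 z.2 * (u G m z.1 * u G m z.2)) ^ (1/P)
        * ((G.adjMatrix ℝ) z.1 z.2 * (u G m z.1 * u G m z.2) ^ (-(1/(2*(m:ℝ))))) ^ (1/Q)
      = (G.adjMatrix ℝ) z.1 z.2 := by
    intro z
    by_cases hxy : G.Adj z.1 z.2
    · have hu1 : (0:ℝ) < u G m z.1 := lt_of_lt_of_le zero_lt_one (one_le_u G hxy m)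
      have hu2 : (0:ℝ) < u G m z.2 := lt_of_lt_of_le zero_lt_one (one_le_u G (G.adj_symm hxy) m)
      have huu : (0:ℝ) < u G m z.1 * u G m z.2 := mul_pos hu1 hu2
      rw [SimpleGraph.adjMatrix_apply, if_pos hxy, one_mul, one_mul]
      rw [← Real.rpow_mul huu.le, ← Real.rpow_add huu]
      rw [show (1/P + -(1/(2*(m:ℝ))) * (1/Q)) = 0 by
        rw [hP, hQ]; field_simp; ring, Real.rpow_zero]
    · rw [SimpleGraph.adjMatrix_apply, if_neg hxy, zero_mul, zero_mul,
        Real.zero_rpow (by positivity), zero_mul]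
  have e2 : ∀ z : V × V,
      (((G.adjMatrix ℝ) z.1 z.2 * (u G m z.1 * u G m z.2)) ^ (1/P)) ^ P
        = (G.adjMatrix ℝ) z.1 z.2 * (u G m z.1 * u G m z.2) := fun z =>
    hrr _ _ (mul_nonneg (adj_nonneg G _ _)
      (mul_nonneg (u_nonneg G m _) (u_nonneg G m _))) hPpos
  have e3 : ∀ z : V × V,
      (((G.adjMatrix ℝ) z.1 z.2 * (u G m z.1 * u G m z.2) ^ (-(1/(2*(m:ℝ))))) ^ (1/Q)) ^ Q
        = (G.adjMatrix ℝ) z.1 z.2 * (u G m z.1 * u G m z.2) ^ (-(1/(2*(m:ℝ)))) := fun z =>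
    hrr _ _ (mul_nonneg (adj_nonneg G _ _)
      (Real.rpow_nonneg (mul_nonneg (u_nonneg G m _) (u_nonneg G m _)) _)) hQpos
  simp only [e1, e2, e3] at hH
  rw [sum_pairs_adj, sum_pairs_uu] at hH
  -- bound S
  have hS : ∑ z : V × V, (G.adjMatrix ℝ) z.1 z.2 * (u G m z.1 * u G m z.2) ^ (-(1/(2*(m:ℝ))))
      ≤ (Fintype.card V : ℝ) := by
    have hptw : ∀ z : V × V,
        (G.adjMatrix ℝ) z.1 z.2 * (u G m z.1 * u G m z.2) ^ (-(1/(2*(m:ℝ))))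
        ≤ (G.adjMatrix ℝ) z.1 z.2 *
            (((u G m z.1) ^ (-(1/(m:ℝ))) + (u G m z.2) ^ (-(1/(m:ℝ)))) / 2) := by
      intro z
      by_cases hxy : G.Adj z.1 z.2
      · have hu1 : (0:ℝ) < u G m z.1 := lt_of_lt_of_le zero_lt_one (one_le_u G hxy m)
        have hu2 : (0:ℝ) < u G m z.2 := lt_of_lt_of_le zero_lt_one (one_le_u G (G.adj_symm hxy) m)
        rw [SimpleGraph.adjMatrix_apply, if_pos hxy, one_mul, one_mul]
        exact sqrt_amgm hu1 hu2 hm1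
      · rw [SimpleGraph.adjMatrix_apply, if_neg hxy, zero_mul, zero_mul]
    have hs1 : ∑ z : V × V, (G.adjMatrix ℝ) z.1 z.2 * (u G m z.1) ^ (-(1/(m:ℝ)))
        = ∑ x, u G 1 x * (u G m x) ^ (-(1/(m:ℝ))) := by
      rw [Fintype.sum_prod_type]
      refine Finset.sum_congr rfl fun x _ => ?_
      dsimp only
      rw [← Finset.sum_mul]
      congr 1
      rw [u_succ]
      exact Finset.sum_congr rfl fun y _ => by rw [u_zero, mul_one]
    have hs2 : ∑ z : V × V, (G.adjMatrix ℝ) z.1 z.2 * (u G m z.2) ^ (-(1/(m:ℝ)))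
        = ∑ y, u G 1 y * (u G m y) ^ (-(1/(m:ℝ))) := by
      rw [Fintype.sum_prod_type, Finset.sum_comm]
      refine Finset.sum_congr rfl fun y _ => ?_
      dsimp only
      rw [← Finset.sum_mul, sum_adj_eq_u_one]
    calc ∑ z : V × V, (G.adjMatrix ℝ) z.1 z.2 * (u G m z.1 * u G m z.2) ^ (-(1/(2*(m:ℝ))))
        ≤ ∑ z : V × V, (G.adjMatrix ℝ) z.1 z.2 *
            (((u G m z.1) ^ (-(1/(m:ℝ))) + (u G m z.2) ^ (-(1/(m:ℝ)))) / 2) :=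
          Finset.sum_le_sum fun z _ => hptw z
      _ = (∑ z : V × V, (G.adjMatrix ℝ) z.1 z.2 * (u G m z.1) ^ (-(1/(m:ℝ)))
            + ∑ z : V × V, (G.adjMatrix ℝ) z.1 z.2 * (u G m z.2) ^ (-(1/(m:ℝ)))) / 2 := by
          rw [← Finset.sum_add_distrib, Finset.sum_div]
          exact Finset.sum_congr rfl fun z _ => by ring
      _ ≤ ((Fintype.card V : ℝ) + (Fintype.card V : ℝ)) / 2 := by
          have t1 := T_le G m hm
          rw [hs1, hs2]
          linarith
      _ = (Fintype.card V : ℝ) := by ring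
  -- combine
  have hfin : h G 1 ≤ (h G (2*m+1)) ^ (1/P) * ((Fintype.card V : ℝ)) ^ (1/Q) := by
    refine le_trans hH (mul_le_mul_of_nonneg_left ?_ (Real.rpow_nonneg ?_ _))
    · exact Real.rpow_le_rpow (Finset.sum_nonneg fun z _ => mul_nonneg (adj_nonneg G _ _)
        (Real.rpow_nonneg (mul_nonneg (u_nonneg G m _) (u_nonneg G m _)) _)) hS
        (le_of_lt (by positivity))
    · rw [← sum_pairs_uu]
      exact Finset.sum_nonneg fun z _ => mul_nonneg (adj_nonneg G _ _)
        (mul_nonneg (u_nonneg G m _) (u_nonneg G m _))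
  have h1nn : 0 ≤ h G 1 := Finset.sum_nonneg fun x _ => u_nonneg G 1 x
  have hknn : 0 ≤ h G (2*m+1) := Finset.sum_nonneg fun x _ => u_nonneg G _ x
  have := Real.rpow_le_rpow h1nn hfin hPpos.le
  rw [Real.mul_rpow (Real.rpow_nonneg hknn _) (Real.rpow_nonneg (by positivity) _)] at this
  rw [hrr _ _ hknn hPpos] at this
  rw [← Real.rpow_natCast (h G 1) (2*m+1), ← Real.rpow_natCast (Fintype.card V : ℝ) (2*m)]
  calc (h G 1) ^ (((2*m+1 : ℕ)):ℝ) = (h G 1) ^ P := by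
        norm_num [hP]
    _ ≤ h G (2*m+1) * ((Fintype.card V : ℝ) ^ (1/Q)) ^ P := this
    _ = h G (2*m+1) * (Fintype.card V : ℝ) ^ (((2*m : ℕ)):ℝ) := by
        congr 1
        rw [← Real.rpow_mul (by positivity)]
        congr 1
        rw [hP, hQ]
        field_simp
        push_cast; ring


lemma even_bound (m : ℕ) : h G m ^ 2 ≤ (Fintype.card V : ℝ) * h G (2*m) := by
  have hh : h G (2*m) = ∑ x, u G m x ^ 2 := by
    rw [show 2*m = m + m by ring, h_add]
    exact Finset.sum_congr rfl fun x _ => (sq (u G m x)).symm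
  rw [hh, h]
  have := sq_sum_le_card_mul_sum_sq (s := Finset.univ) (f := fun x => u G m x)
  simpa using this

lemma main (k : ℕ) (hk : 1 ≤ k) :
    h G 1 ^ k ≤ h G k * (Fintype.card V : ℝ) ^ (k-1) := by
  induction k using Nat.strong_induction_on with
  | _ k ih =>
    rcases Nat.even_or_odd k with ⟨m, hm⟩ | ⟨m, hm⟩
    · have hm1 : 1 ≤ m := by omega
      have ihm := ih m (by omega) hm1
      have h1nn : 0 ≤ h G 1 := Finset.sum_nonneg fun x _ => u_nonneg G 1 x
      have hmnn : 0 ≤ h G m := Finset.sum_nonneg fun x _ => u_nonneg G m x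
      have hnn : (0:ℝ) ≤ (Fintype.card V : ℝ) := by positivity
      calc h G 1 ^ k = (h G 1 ^ m) ^ 2 := by rw [← pow_mul]; congr 1; omega
        _ ≤ (h G m * (Fintype.card V : ℝ) ^ (m-1)) ^ 2 :=
            pow_le_pow_left₀ (by positivity) ihm 2
        _ = (h G m ^ 2) * (Fintype.card V : ℝ) ^ (2*(m-1)) := by
            rw [mul_pow, ← pow_mul, mul_comm (m-1) 2]
        _ ≤ ((Fintype.card V : ℝ) * h G (2*m)) * (Fintype.card V : ℝ) ^ (2*(m-1)) :=
            mul_le_mul_of_nonneg_right (even_bound G m) (by positivity)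
        _ = h G (2*m) * (Fintype.card V : ℝ) ^ (2*(m-1)+1) := by ring
        _ = h G k * (Fintype.card V : ℝ) ^ (k-1) := by
            rw [show 2*m = k by omega, show 2*(m-1)+1 = k-1 by omega]
    · rcases Nat.eq_zero_or_pos m with rfl | hmpos
      · rw [hm]; simp
      · have hob := odd_bound G m hmpos
        rw [hm, show 2*m+1-1 = 2*m by omega]
        exact hob

end BRaux

theorem blakley_roy_paths {V : Type*} [Fintype V] (G : SimpleGraph V) (k : ℕ) (hk : 1 ≤ k)
    (d : ℝ) (hd : 0 ≤ d)
    (hE : d / 2 * (Fintype.card V : ℝ) ^ 2 ≤ (G.edgeFinset.card : ℝ)) :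
    d ^ k * (Fintype.card V : ℝ) ^ (k + 1) ≤ (pathHomCount G k : ℝ) := by
  have hh1 : BRaux.h G 1 = 2 * (G.edgeFinset.card : ℝ) := by
    rw [BRaux.h]
    simp only [BRaux.u_one]
    rw [← Nat.cast_sum]
    rw [SimpleGraph.sum_degrees_eq_twice_card_edges]
    push_cast
    ring
  have hd1 : d * (Fintype.card V : ℝ) ^ 2 ≤ BRaux.h G 1 := by rw [hh1]; linarith
  have hknn : 0 ≤ BRaux.h G k := Finset.sum_nonneg fun x _ => BRaux.u_nonneg G k x
  rw [BRaux.pathHomCount_eq]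
  rcases Nat.eq_zero_or_pos (Fintype.card V) with hc | hc
  · rw [hc]
    push_cast
    rw [zero_pow (by omega : k + 1 ≠ 0), mul_zero]
    exact hknn
  · have hnpos : (0:ℝ) < (Fintype.card V : ℝ) := by exact_mod_cast hc
    have hmain := BRaux.main G k hk
    have hchain : d^k * (Fintype.card V : ℝ)^(2*k) ≤ BRaux.h G k * (Fintype.card V : ℝ)^(k-1) := by
      calc d^k * (Fintype.card V : ℝ)^(2*k) = (d * (Fintype.card V : ℝ)^2)^k := by
            rw [mul_pow, ← pow_mul]
        _ ≤ BRaux.h G 1 ^ k := pow_le_pow_left₀ (by positivity) hd1 k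
        _ ≤ _ := hmain
    have hsplit : (Fintype.card V : ℝ)^(2*k) = (Fintype.card V : ℝ)^(k+1) * (Fintype.card V : ℝ)^(k-1) := by
      rw [← pow_add]
      congr 1
      omega
    rw [hsplit, ← mul_assoc] at hchain
    exact le_of_mul_le_mul_right hchain (by positivity)
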